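/- Let C, D, M ∈ ℝ^{n×n} with C invertible and M symmetric positive definite. Then for all x ∈ ℝⁿ and all θ ∈ [-1,1] the inequality (θCx+Dx)ᵀ(I+M⁻¹+θ²I+θ²M)⁻¹(θCx+Dx) ≤ (Cx)ᵀ(I+M)⁻¹(Cx) holds if and only if both matrices 2I + M⁻¹ + M − (I ± DC⁻¹)(I+M)(I ± DC⁻¹)ᵀ (with '+' and with '−') are positive semidefinite. -/

import Mathlib

open Matrix

section Aux

variable {n : ℕ}

private lemma psd_smul {A : Matrix (Fin n) (Fin n) ℝ} (hA : A.PosSemidef) {c : ℝ}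
    (hc : 0 ≤ c) : (c • A).PosSemidef := by
  refine .of_dotProduct_mulVec_nonneg ?_ fun x => ?_
  · unfold Matrix.IsHermitian
    rw [conjTranspose_smul, hA.1.eq, star_trivial]
  · rw [smul_mulVec, dotProduct_smul]
    exact smul_nonneg hc (hA.dotProduct_mulVec_nonneg x)

private lemma quad_iff {A Bi F : Matrix (Fin n) (Fin n) ℝ}
    (hA : A.IsHermitian) (hBi : Bi.IsHermitian) :
    (∀ y, (F *ᵥ y) ⬝ᵥ A *ᵥ (F *ᵥ y) ≤ y ⬝ᵥ Bi *ᵥ y) ↔ (Bi - Fᵀ * A * F).PosSemidef := by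
  have hherm : (Bi - Fᵀ * A * F).IsHermitian := by
    apply hBi.sub
    simpa [conjTranspose_eq_transpose_of_trivial] using
      isHermitian_conjTranspose_mul_mul F hA
  have key : ∀ y : Fin n → ℝ, y ⬝ᵥ (Bi - Fᵀ * A * F) *ᵥ y
      = y ⬝ᵥ Bi *ᵥ y - (F *ᵥ y) ⬝ᵥ A *ᵥ (F *ᵥ y) := by
    intro y
    rw [sub_mulVec, dotProduct_sub]
    congr 1
    rw [← mulVec_mulVec, ← mulVec_mulVec, dotProduct_mulVec, vecMul_transpose]
  constructor
  · intro h
    refine .of_dotProduct_mulVec_nonneg hherm fun y => ?_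
    rw [star_trivial, key y]
    exact sub_nonneg.2 (h y)
  · intro h y
    have := h.dotProduct_mulVec_nonneg y
    rw [star_trivial, key y] at this
    linarith

private lemma schur {A B F : Matrix (Fin n) (Fin n) ℝ} (hA : A.PosDef) (hB : B.PosDef) :
    (B⁻¹ - Fᵀ * A⁻¹ * F).PosSemidef ↔ (A - F * B * Fᵀ).PosSemidef := by
  haveI : Invertible A := hA.isUnit.invertible
  haveI : Invertible (B⁻¹) := hB.inv.isUnit.invertible
  have hFt : Fᴴ = Fᵀ := conjTranspose_eq_transpose_of_trivial F
  have h1 := Matrix.PosDef.fromBlocks₁₁ F (B⁻¹) hA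
  have h2 := Matrix.PosDef.fromBlocks₂₂ A F hB.inv
  rw [hFt] at h1 h2
  rw [Matrix.nonsing_inv_nonsing_inv B ((Matrix.isUnit_iff_isUnit_det B).1 hB.isUnit)] at h2
  exact h1.symm.trans h2

end Aux

/-- Equivalence of condition (iv) and the positive semidefiniteness condition (ii)
in Lemma 4 of the paper. -/
theorem stmt2 {n : ℕ} (C D M : Matrix (Fin n) (Fin n) ℝ)
    (hC : IsUnit C.det) (hM : M.PosDef) :
    (∀ (x : Fin n → ℝ) (θ : ℝ), θ ∈ Set.Icc (-1 : ℝ) 1 →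
      (θ • (C *ᵥ x) + D *ᵥ x) ⬝ᵥ
          (1 + M⁻¹ + θ ^ 2 • (1 : Matrix (Fin n) (Fin n) ℝ) + θ ^ 2 • M)⁻¹ *ᵥ
          (θ • (C *ᵥ x) + D *ᵥ x) ≤
        (C *ᵥ x) ⬝ᵥ (1 + M)⁻¹ *ᵥ (C *ᵥ x)) ↔
    (((2 : ℝ) • (1 : Matrix (Fin n) (Fin n) ℝ) + M⁻¹ + M
        - (1 + D * C⁻¹) * (1 + M) * (1 + D * C⁻¹)ᵀ).PosSemidef ∧
      ((2 : ℝ) • (1 : Matrix (Fin n) (Fin n) ℝ) + M⁻¹ + M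
        - (1 - D * C⁻¹) * (1 + M) * (1 - D * C⁻¹)ᵀ).PosSemidef) := by
  have hCi : C * C⁻¹ = 1 := mul_nonsing_inv C hC
  have hCi' : C⁻¹ * C = 1 := nonsing_inv_mul C hC
  have hBpd : ((1 : Matrix (Fin n) (Fin n) ℝ) + M).PosDef := Matrix.PosDef.one.add hM
  have hApd : ∀ θ : ℝ,
      (1 + M⁻¹ + θ ^ 2 • (1 : Matrix (Fin n) (Fin n) ℝ) + θ ^ 2 • M).PosDef := fun θ =>
    ((Matrix.PosDef.one.add hM.inv).add_posSemidef
      (psd_smul Matrix.PosDef.one.posSemidef (sq_nonneg θ))).add_posSemidef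
      (psd_smul hM.posSemidef (sq_nonneg θ))
  have subst : ∀ (x : Fin n → ℝ) (θ : ℝ),
      θ • (C *ᵥ x) + D *ᵥ x
        = (θ • (1 : Matrix (Fin n) (Fin n) ℝ) + D * C⁻¹) *ᵥ (C *ᵥ x) := by
    intro x θ
    rw [add_mulVec, smul_mulVec, one_mulVec, mulVec_mulVec, mul_assoc, hCi', mul_one]
  have key : ∀ θ : ℝ,
      (∀ y : Fin n → ℝ,
          ((θ • (1 : Matrix (Fin n) (Fin n) ℝ) + D * C⁻¹) *ᵥ y) ⬝ᵥ
              (1 + M⁻¹ + θ ^ 2 • (1 : Matrix (Fin n) (Fin n) ℝ) + θ ^ 2 • M)⁻¹ *ᵥ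
              ((θ • (1 : Matrix (Fin n) (Fin n) ℝ) + D * C⁻¹) *ᵥ y) ≤
            y ⬝ᵥ (1 + M)⁻¹ *ᵥ y) ↔
        ((1 + M⁻¹ + θ ^ 2 • (1 : Matrix (Fin n) (Fin n) ℝ) + θ ^ 2 • M)
          - (θ • (1 : Matrix (Fin n) (Fin n) ℝ) + D * C⁻¹) * (1 + M)
              * (θ • (1 : Matrix (Fin n) (Fin n) ℝ) + D * C⁻¹)ᵀ).PosSemidef := fun θ =>
    (quad_iff (hApd θ).inv.1 hBpd.inv.1).trans (schur (hApd θ) hBpd)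
  have hneg : (-1 : ℝ) • (1 : Matrix (Fin n) (Fin n) ℝ) + D * C⁻¹
      = -(1 - D * C⁻¹) := by module
  have e1 : ((1 : Matrix (Fin n) (Fin n) ℝ) + M⁻¹
        + (1 : ℝ) ^ 2 • (1 : Matrix (Fin n) (Fin n) ℝ) + (1 : ℝ) ^ 2 • M)
      - ((1 : ℝ) • (1 : Matrix (Fin n) (Fin n) ℝ) + D * C⁻¹) * (1 + M)
          * ((1 : ℝ) • (1 : Matrix (Fin n) (Fin n) ℝ) + D * C⁻¹)ᵀ
      = (2 : ℝ) • (1 : Matrix (Fin n) (Fin n) ℝ) + M⁻¹ + M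
          - (1 + D * C⁻¹) * (1 + M) * (1 + D * C⁻¹)ᵀ := by
    simp only [one_pow, one_smul]
    module
  have e2 : ((1 : Matrix (Fin n) (Fin n) ℝ) + M⁻¹
        + (-1 : ℝ) ^ 2 • (1 : Matrix (Fin n) (Fin n) ℝ) + (-1 : ℝ) ^ 2 • M)
      - ((-1 : ℝ) • (1 : Matrix (Fin n) (Fin n) ℝ) + D * C⁻¹) * (1 + M)
          * ((-1 : ℝ) • (1 : Matrix (Fin n) (Fin n) ℝ) + D * C⁻¹)ᵀ
      = (2 : ℝ) • (1 : Matrix (Fin n) (Fin n) ℝ) + M⁻¹ + M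
          - (1 - D * C⁻¹) * (1 + M) * (1 - D * C⁻¹)ᵀ := by
    rw [hneg]
    simp only [transpose_neg, neg_mul, mul_neg, neg_neg]
    module
  have interp : ∀ θ : ℝ,
      ((1 : Matrix (Fin n) (Fin n) ℝ) + M⁻¹
          + θ ^ 2 • (1 : Matrix (Fin n) (Fin n) ℝ) + θ ^ 2 • M)
        - (θ • (1 : Matrix (Fin n) (Fin n) ℝ) + D * C⁻¹) * (1 + M)
            * (θ • (1 : Matrix (Fin n) (Fin n) ℝ) + D * C⁻¹)ᵀ
      = ((1 + θ) / 2) • ((2 : ℝ) • (1 : Matrix (Fin n) (Fin n) ℝ) + M⁻¹ + M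
            - (1 + D * C⁻¹) * (1 + M) * (1 + D * C⁻¹)ᵀ)
        + ((1 - θ) / 2) • ((2 : ℝ) • (1 : Matrix (Fin n) (Fin n) ℝ) + M⁻¹ + M
            - (1 - D * C⁻¹) * (1 + M) * (1 - D * C⁻¹)ᵀ) := by
    intro θ
    simp only [transpose_add, transpose_sub, transpose_smul, transpose_one, add_mul, mul_add,
      sub_mul, mul_sub, smul_mul_assoc, mul_smul_comm, Matrix.one_mul, Matrix.mul_one,
      smul_add, smul_sub, smul_smul]
    module
  constructor
  · intro h
    constructor
    · rw [← e1]
      refine (key 1).1 fun y => ?_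
      have h1 := h (C⁻¹ *ᵥ y) 1 (by norm_num)
      rw [subst] at h1
      simpa [mulVec_mulVec, hCi] using h1
    · rw [← e2]
      refine (key (-1)).1 fun y => ?_
      have h1 := h (C⁻¹ *ᵥ y) (-1) (by norm_num)
      rw [subst] at h1
      simpa [mulVec_mulVec, hCi] using h1
  · rintro ⟨hp, hm⟩ x θ hθ
    rw [subst x θ]
    refine (key θ).2 ?_ (C *ᵥ x)
    rw [interp θ]
    exact (psd_smul hp (by have := hθ.1; linarith)).add
      (psd_smul hm (by have := hθ.2; linarith))
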